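/- arXiv:2312.11039 — 2 statements merged into one kernel-verified Lean document; each statement's English description precedes it below -/
import Mathlib

section
/- Let {eₙ}ₙ₌₁^∞ be an orthonormal basis of a Hilbert space H. If a sequence {xₙ} ⊂ H satisfies ∑ₙ ‖xₙ − eₙ‖² < 1, then {xₙ} is a Riesz basis of H; that is, there exists a bounded invertible linear operator L : H → H with L(eₙ) = xₙ for all n. -/
open scoped ComplexConjugate ENNReal

/-- Let `{eₙ}` be an orthonormal basis of a (separable, complex) Hilbert space `H`. If
`{xₙ} ⊂ H` satisfies `∑ₙ ‖xₙ − eₙ‖² < 1`, then `{xₙ}` is a Riesz basis of `H`: there is a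
bounded invertible linear operator `L : H → H` (a continuous linear equivalence) with
`L(eₙ) = xₙ` for all `n`. -/
theorem riesz_basis_of_small_perturbation_of_onb
    {H : Type*} [NormedAddCommGroup H] [InnerProductSpace ℂ H] [CompleteSpace H]
    (e : HilbertBasis ℕ ℂ H) (x : ℕ → H)
    (h_sum : Summable (fun n : ℕ => ‖x n - e n‖ ^ 2))
    (h_lt : (∑' n : ℕ, ‖x n - e n‖ ^ 2) < 1) :
    ∃ L : H ≃L[ℂ] H, ∀ n : ℕ, L (e n) = x n := by
  classical
  set d : ℕ → H := fun n => x n - e n with hd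
  set C : ℝ := ∑' n, ‖d n‖ ^ 2 with hC
  have hC0 : 0 ≤ C := tsum_nonneg fun n => by positivity
  have htwo : (0:ℝ) < (2 : ℝ≥0∞).toReal := by norm_num
  -- g ∈ ℓ²(ℝ) with entries ‖d n‖
  have hpow : ∀ r : ℝ, r ^ ((2:ℝ≥0∞).toReal) = r ^ (2:ℕ) := fun r => by
    rw [show ((2:ℝ≥0∞).toReal) = ((2:ℕ):ℝ) by norm_num, Real.rpow_natCast]
  have hg_mem : Memℓp (fun n => ‖d n‖) (2 : ℝ≥0∞) := by
    apply memℓp_gen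
    simp only [norm_norm, hpow]
    exact h_sum
  set g : lp (fun _ : ℕ => ℝ) 2 := ⟨fun n => ‖d n‖, hg_mem⟩ with hg
  have hg_norm : ‖g‖ = Real.sqrt C := by
    have := lp.norm_rpow_eq_tsum htwo g
    have h2 : ‖g‖ ^ (2:ℕ) = C := by
      rw [hC]
      rw [← hpow ‖g‖, this]
      refine tsum_congr fun n => ?_
      rw [hpow]
      show ‖‖d n‖‖ ^ (2:ℕ) = ‖d n‖ ^ (2:ℕ)
      rw [norm_norm]
    rw [← h2]
    rw [Real.sqrt_sq (norm_nonneg g)]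
  -- key estimate for f ∈ ℓ²(ℂ)
  have key : ∀ f : lp (fun _ : ℕ => ℂ) 2,
      Summable (fun n => ‖f n‖ * ‖d n‖) ∧
      (∑' n, ‖f n‖ * ‖d n‖) ≤ Real.sqrt C * ‖f‖ := by
    intro f
    have hf_mem : Memℓp (fun n => ‖f n‖) (2 : ℝ≥0∞) := by
      apply memℓp_gen
      simpa using (lp.memℓp f).summable htwo
    set f' : lp (fun _ : ℕ => ℝ) 2 := ⟨fun n => ‖f n‖, hf_mem⟩ with hf'
    have hsum : Summable (fun n => ‖f n‖ * ‖d n‖) := by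
      have := lp.summable_inner (𝕜 := ℝ) f' g
      exact (by simpa [RCLike.inner_apply, hf', hg] using this : Summable fun i => ‖d i‖ * ‖f i‖).congr fun n => mul_comm _ _
    have hf'_norm : ‖f'‖ = ‖f‖ := by
      rw [lp.norm_eq_tsum_rpow htwo f', lp.norm_eq_tsum_rpow htwo f]
      congr 2
      refine funext fun n => ?_
      show ‖‖f n‖‖ ^ _ = ‖f n‖ ^ _
      rw [norm_norm]
    have hip : (∑' n, ‖f n‖ * ‖d n‖) = inner (𝕜 := ℝ) f' g := by
      rw [← (lp.hasSum_inner (𝕜 := ℝ) f' g).tsum_eq]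
      refine tsum_congr fun n => ?_
      simp only [RCLike.inner_apply, conj_trivial]
      exact mul_comm _ _
    refine ⟨hsum, ?_⟩
    rw [hip]
    calc inner (𝕜 := ℝ) f' g ≤ ‖f'‖ * ‖g‖ := real_inner_le_norm f' g
      _ = Real.sqrt C * ‖f‖ := by rw [hf'_norm, hg_norm, mul_comm]
  have hsummable : ∀ f : lp (fun _ : ℕ => ℂ) 2, Summable (fun n => f n • d n) := by
    intro f
    apply Summable.of_norm
    convert (key f).1 using 2 with n
    rw [norm_smul]
  -- the linear map S
  set Slin : lp (fun _ : ℕ => ℂ) 2 →ₗ[ℂ] H :=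
    { toFun := fun f => ∑' n, f n • d n
      map_add' := by
        intro f g'
        show (∑' n, (f + g') n • d n) = (∑' n, f n • d n) + (∑' n, g' n • d n)
        rw [← Summable.tsum_add (hsummable f) (hsummable g')]
        refine tsum_congr fun n => ?_
        simp [add_smul]
      map_smul' := by
        intro c f
        show (∑' n, (c • f) n • d n) = c • ∑' n, f n • d n
        rw [← Summable.tsum_const_smul c (hsummable f)]
        refine tsum_congr fun n => ?_
        simp [smul_smul] } with hSlin
  have hSbound : ∀ f, ‖Slin f‖ ≤ Real.sqrt C * ‖f‖ := by
    intro f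
    calc ‖Slin f‖ ≤ ∑' n, ‖f n • d n‖ := norm_tsum_le_tsum_norm (by
            convert (key f).1 using 2 with n; rw [norm_smul])
      _ = ∑' n, ‖f n‖ * ‖d n‖ := tsum_congr fun n => norm_smul _ _
      _ ≤ Real.sqrt C * ‖f‖ := (key f).2
  set S : lp (fun _ : ℕ => ℂ) 2 →L[ℂ] H :=
    Slin.mkContinuous (Real.sqrt C) hSbound with hS
  have hS_single : ∀ n, S (lp.single 2 n (1:ℂ)) = d n := by
    intro n
    show (∑' m, (lp.single 2 n (1:ℂ) : lp (fun _ : ℕ => ℂ) 2) m • d m) = d n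
    rw [tsum_eq_single n]
    · show (lp.single 2 n (1:ℂ) : lp (fun _ : ℕ => ℂ) 2) n • d n = d n
      rw [lp.single_apply_self (E := fun _ : ℕ => ℂ) 2 n (1:ℂ)]; simp
    · intro m hm
      show (lp.single 2 n (1:ℂ) : lp (fun _ : ℕ => ℂ) 2) m • d m = 0
      rw [lp.single_apply_ne (E := fun _ : ℕ => ℂ) 2 n (1:ℂ) hm]
      simp
  -- T : H →L H
  set T : H →L[ℂ] H := S.comp
    (e.repr.toContinuousLinearEquiv : H ≃L[ℂ] lp (fun _ : ℕ => ℂ) 2).toContinuousLinearMap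
    with hT
  have hT_apply : ∀ v, T v = S (e.repr v) := fun v => rfl
  have hT_norm : ‖T‖ < 1 := by
    have h1 : ‖T‖ ≤ Real.sqrt C := by
      apply ContinuousLinearMap.opNorm_le_bound _ (Real.sqrt_nonneg C)
      intro v
      rw [hT_apply]
      calc ‖S (e.repr v)‖ ≤ Real.sqrt C * ‖e.repr v‖ := hSbound _
        _ = Real.sqrt C * ‖v‖ := by rw [e.repr.norm_map]
    calc ‖T‖ ≤ Real.sqrt C := h1
      _ < 1 := by
        rw [show (1:ℝ) = Real.sqrt 1 by simp]
        exact Real.sqrt_lt_sqrt hC0 h_lt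
  -- invertibility of 1 + T
  have hnegT : ‖-T‖ < 1 := by rwa [norm_neg]
  set u : (H →L[ℂ] H)ˣ := Units.oneSub (-T) hnegT with hu
  refine ⟨ContinuousLinearEquiv.unitsEquiv ℂ H u, ?_⟩
  intro n
  rw [ContinuousLinearEquiv.unitsEquiv_apply]
  have huval : (u : H →L[ℂ] H) = 1 + T := by
    rw [hu, Units.val_oneSub, sub_neg_eq_add]
  rw [huval]
  have : T (e n) = d n := by
    rw [hT_apply, e.repr_self, hS_single]
  simp [this, hd]
end

section
/- There do not exist a function g ∈ L²(ℝ), a uniformly discrete sequence {λₙ} ⊂ ℝ, functions {gₙ*} ⊂ L²(ℝ), and a constant K, such that every f ∈ L²(ℝ) admits a series expansion f(x) = ∑ₙ₌₁^∞ ⟨f, gₙ*⟩ g(x − λₙ) convergent in the L²(ℝ) norm, while also ∑ₙ₌₁^∞ |⟨f, gₙ*⟩|² ≤ K ‖f‖² for all f ∈ L²(ℝ). -/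
open MeasureTheory Filter Complex ComplexConjugate AddCircle
open scoped ENNReal NNReal

section NoFrameAux




/-- L² Cauchy–Schwarz for integrals of `u * conj v`. -/
lemma aux_l2_int_mul {u v : ℝ → ℂ} (hu : MemLp u 2 (volume : Measure ℝ))
    (hv : MemLp v 2 (volume : Measure ℝ)) :
    Integrable (fun x => u x * conj (v x)) volume := by
  have h := MeasureTheory.L2.integrable_inner (𝕜 := ℂ) (hv.toLp v) (hu.toLp u)
  have h1 : (fun x => (inner ℂ ((hv.toLp v) x) ((hu.toLp u) x) : ℂ)) =ᵐ[volume]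
      (fun x => u x * conj (v x)) := by
    filter_upwards [hv.coeFn_toLp, hu.coeFn_toLp] with x hvx hux
    simp [RCLike.inner_apply, hvx, hux, mul_comm]
  exact (h.congr h1)

lemma aux_l2_int_bound {u v : ℝ → ℂ} (hu : MemLp u 2 (volume : Measure ℝ))
    (hv : MemLp v 2 (volume : Measure ℝ)) :
    ‖∫ x, u x * conj (v x)‖ ≤
      (eLpNorm u 2 volume).toReal * (eLpNorm v 2 volume).toReal := by
  set U := hu.toLp u
  set V := hv.toLp v
  have h1 : (∫ x, u x * conj (v x)) = conj (inner (𝕜 := ℂ) U V) := by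
    rw [MeasureTheory.L2.inner_def, ← integral_conj]
    refine integral_congr_ae ?_
    filter_upwards [hu.coeFn_toLp, hv.coeFn_toLp] with x hux hvx
    simp [RCLike.inner_apply, U, V, hux, hvx, mul_comm]
  rw [h1]
  calc ‖conj (inner (𝕜 := ℂ) U V)‖ = ‖(inner (𝕜 := ℂ) U V : ℂ)‖ := RCLike.norm_conj _
  _ ≤ ‖U‖ * ‖V‖ := norm_inner_le_norm U V
  _ = (eLpNorm u 2 volume).toReal * (eLpNorm v 2 volume).toReal := by
      rw [Lp.norm_toLp, Lp.norm_toLp]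

/-- translation preserves MemLp on ℝ. -/
lemma aux_memℒp_translate {g : ℝ → ℂ} (hg : MemLp g 2 (volume : Measure ℝ)) (a : ℝ) :
    MemLp (fun x => g (x - a)) 2 (volume : Measure ℝ) := by
  have hmp : MeasurePreserving (fun x : ℝ => x + (-a)) volume volume :=
    ⟨measurable_add_const _, map_add_right_eq_self volume _⟩
  have := hg.comp_measurePreserving hmp
  simpa [Function.comp_def, sub_eq_add_neg] using this





noncomputable def chr (ω : ℤ) (x : ℝ) : ℂ := Complex.exp (2 * Real.pi * Complex.I * ω * x)

lemma chr_eq (ω : ℤ) (x : ℝ) :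
    chr ω x = Complex.exp (((2 * Real.pi * ω * x : ℝ) : ℂ) * Complex.I) := by
  unfold chr; congr 1; push_cast; ring

lemma norm_chr (ω : ℤ) (x : ℝ) : ‖chr ω x‖ = 1 := by
  rw [chr_eq, Complex.norm_exp_ofReal_mul_I]

lemma chr_add (ω : ℤ) (u a : ℝ) : chr ω (u + a) = chr ω u * chr ω a := by
  unfold chr; rw [← Complex.exp_add]; congr 1; push_cast; ring

lemma chr_cont (ω : ℤ) : Continuous (chr ω) := by
  unfold chr
  exact Complex.continuous_exp.comp (by continuity)

noncomputable def testf (ω : ℤ) (s : ℝ) : ℝ → ℂ :=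
  Set.indicator (Set.Ioc s (s+1)) (fun x => chr ω x)

lemma testf_memℒp (ω : ℤ) (s : ℝ) : MemLp (testf ω s) 2 (volume : Measure ℝ) := by
  refine MemLp.of_le (memLp_indicator_const 2 (measurableSet_Ioc (a := s) (b := s+1)) (1:ℂ)
    (Or.inr (by simp))) ?_ (Filter.Eventually.of_forall fun x => ?_)
  · exact (Continuous.aestronglyMeasurable (by
        unfold chr
        exact Complex.continuous_exp.comp (by continuity) : Continuous (chr ω))).indicator
      measurableSet_Ioc
  · by_cases hx : x ∈ Set.Ioc s (s+1) <;>
      simp [testf, Set.indicator_of_mem, Set.indicator_of_notMem, hx,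
        norm_chr]

lemma testf_eLpNorm_le (ω : ℤ) (s : ℝ) : eLpNorm (testf ω s) 2 volume ≤ 1 := by
  have h : eLpNorm (testf ω s) 2 volume ≤
      eLpNorm (Set.indicator (Set.Ioc s (s+1)) (fun _ => (1:ℂ))) 2 volume := by
    refine eLpNorm_mono fun x => ?_
    by_cases hx : x ∈ Set.Ioc s (s+1) <;>
      simp [testf, Set.indicator_of_mem, Set.indicator_of_notMem, hx,
        norm_chr]
  refine h.trans ?_
  rw [eLpNorm_indicator_const measurableSet_Ioc (by norm_num) (by norm_num)]
  simp [Real.volume_Ioc]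

lemma testf_self_integral (ω : ℤ) (s : ℝ) :
    (∫ x, testf ω s x * conj (testf ω s x)) = 1 := by
  have h : (fun x => testf ω s x * conj (testf ω s x)) =
      Set.indicator (Set.Ioc s (s+1)) (fun _ => (1:ℂ)) := by
    funext x
    by_cases hx : x ∈ Set.Ioc s (s+1)
    · simp only [testf, Set.indicator_of_mem hx]
      rw [Complex.mul_conj]
      norm_cast
      rw [Complex.normSq_eq_norm_sq]
      have := norm_chr ω x
      simp [this]
    · simp [testf, Set.indicator_of_notMem, hx]
  rw [h, integral_indicator_const _ measurableSet_Ioc]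
  simp [Real.volume_Ioc]



-- placeholders for already-proven aux lemmas
lemma frame_lower_bound
    {g : ℝ → ℂ} {lam : ℕ → ℝ} {gs : ℕ → ℝ → ℂ} {K : ℝ}
    (hg : MemLp g 2 (volume : Measure ℝ))
    (hexp : ∀ f : ℝ → ℂ, MemLp f 2 (volume : Measure ℝ) →
        Tendsto
          (fun N : ℕ => eLpNorm
            (fun x : ℝ => f x - ∑ n ∈ Finset.range N,
              (∫ t : ℝ, f t * conj (gs n t)) * g (x - lam n)) 2 (volume : Measure ℝ))
          atTop (nhds 0))
    (hbes : ∀ f : ℝ → ℂ, MemLp f 2 (volume : Measure ℝ) →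
        Summable (fun n : ℕ => ‖∫ t : ℝ, f t * conj (gs n t)‖ ^ 2) ∧
        (∑' n : ℕ, ‖∫ t : ℝ, f t * conj (gs n t)‖ ^ 2) ≤
          K * (eLpNorm f 2 (volume : Measure ℝ)).toReal ^ 2)
    (hK : 0 < K)
    {f : ℝ → ℂ} (hf : MemLp f 2 (volume : Measure ℝ))
    (hff : (∫ x, f x * conj (f x)) = 1)
    (hfn : eLpNorm f 2 volume ≤ 1) :
    ENNReal.ofReal K⁻¹ ≤ ∑' n, ENNReal.ofReal (‖∫ x, f x * conj (g (x - lam n))‖ ^ 2) := by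
  set a : ℕ → ℂ := fun n => ∫ t, f t * conj (gs n t) with ha
  set b : ℕ → ℂ := fun n => ∫ x, f x * conj (g (x - lam n)) with hb
  have hTg : ∀ n, MemLp (fun x => g (x - lam n)) 2 (volume : Measure ℝ) :=
    fun n => aux_memℒp_translate hg _
  have hS : ∀ N, MemLp (fun x => ∑ n ∈ Finset.range N, a n * g (x - lam n)) 2
      (volume : Measure ℝ) := by
    intro N
    exact memLp_finset_sum _ (fun n _ => ((hTg n).const_mul (a n)))
  have key : ∀ N : ℕ, (1 : ℂ) - ∑ n ∈ Finset.range N, a n * conj (b n)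
      = ∫ x, (f x - ∑ n ∈ Finset.range N, a n * g (x - lam n)) * conj (f x) := by
    intro N
    have h1 : Integrable (fun x => f x * conj (f x)) volume := aux_l2_int_mul hf hf
    have h2 : ∀ n, Integrable (fun x => a n * (g (x - lam n) * conj (f x))) volume :=
      fun n => (aux_l2_int_mul (hTg n) hf).const_mul (a n)
    have h3 : Integrable
        (fun x => (∑ n ∈ Finset.range N, a n * g (x - lam n)) * conj (f x)) volume := by
      have hee : (fun x => (∑ n ∈ Finset.range N, a n * g (x - lam n)) * conj (f x))
          = fun x => ∑ n ∈ Finset.range N, a n * (g (x - lam n) * conj (f x)) := by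
        funext x
        rw [Finset.sum_mul]
        exact Finset.sum_congr rfl fun n _ => by ring
      rw [hee]
      exact integrable_finset_sum _ (fun n _ => h2 n)
    have h4 : (fun x => (f x - ∑ n ∈ Finset.range N, a n * g (x - lam n)) * conj (f x))
        = fun x => f x * conj (f x)
            - (∑ n ∈ Finset.range N, a n * g (x - lam n)) * conj (f x) := by
      funext x; ring
    rw [h4, integral_sub h1 h3, hff]
    congr 1
    have hee : (fun x => (∑ n ∈ Finset.range N, a n * g (x - lam n)) * conj (f x))
        = fun x => ∑ n ∈ Finset.range N, a n * (g (x - lam n) * conj (f x)) := by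
      funext x
      rw [Finset.sum_mul]
      exact Finset.sum_congr rfl fun n _ => by ring
    rw [hee, integral_finset_sum _ (fun n _ => h2 n)]
    refine Finset.sum_congr rfl fun n _ => ?_
    rw [integral_const_mul]
    congr 1
    simp only [hb]
    rw [← integral_conj]
    refine integral_congr_ae (Filter.Eventually.of_forall fun x => ?_)
    simp [mul_comm]
  have hbound := hbes f hf
  have htoReal : (eLpNorm f 2 volume).toReal ≤ 1 := by
    have := ENNReal.toReal_mono (by simp) hfn
    simpa using this
  have hCS : ∀ N : ℕ, ‖∑ n ∈ Finset.range N, a n * conj (b n)‖ ^ 2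
      ≤ K * ∑ n ∈ Finset.range N, ‖b n‖ ^ 2 := by
    intro N
    have c1 : ‖∑ n ∈ Finset.range N, a n * conj (b n)‖
        ≤ ∑ n ∈ Finset.range N, ‖a n‖ * ‖b n‖ := by
      refine (norm_sum_le _ _).trans (le_of_eq ?_)
      refine Finset.sum_congr rfl fun n _ => ?_
      rw [norm_mul, RCLike.norm_conj]
    have c2 : ‖∑ n ∈ Finset.range N, a n * conj (b n)‖ ^ 2
        ≤ (∑ n ∈ Finset.range N, ‖a n‖ * ‖b n‖) ^ 2 :=
      pow_le_pow_left₀ (norm_nonneg _) c1 2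
    have c3 := Finset.sum_mul_sq_le_sq_mul_sq (Finset.range N)
      (fun n => ‖a n‖) (fun n => ‖b n‖)
    have c4 : (∑ n ∈ Finset.range N, ‖a n‖ ^ 2) ≤ K := by
      have c5 : (∑ n ∈ Finset.range N, ‖a n‖ ^ 2)
          ≤ ∑' n, ‖a n‖ ^ 2 :=
        Summable.sum_le_tsum _ (fun i _ => sq_nonneg _) hbound.1
      refine c5.trans (hbound.2.trans ?_)
      calc K * (eLpNorm f 2 volume).toReal ^ 2 ≤ K * 1 := by
            refine mul_le_mul_of_nonneg_left ?_ hK.le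
            exact pow_le_one₀ ENNReal.toReal_nonneg htoReal
      _ = K := mul_one K
    calc ‖∑ n ∈ Finset.range N, a n * conj (b n)‖ ^ 2
        ≤ (∑ n ∈ Finset.range N, ‖a n‖ ^ 2) * ∑ n ∈ Finset.range N, ‖b n‖ ^ 2 :=
          c2.trans c3
    _ ≤ K * ∑ n ∈ Finset.range N, ‖b n‖ ^ 2 :=
          mul_le_mul_of_nonneg_right c4
            (Finset.sum_nonneg fun n _ => sq_nonneg _)
  have hlim : Tendsto (fun N => ∑ n ∈ Finset.range N, a n * conj (b n)) atTop (nhds 1) := by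
    rw [tendsto_iff_norm_sub_tendsto_zero]
    have h0 := hexp f hf
    have h0' : Tendsto (fun N : ℕ => (eLpNorm
        (fun x : ℝ => f x - ∑ n ∈ Finset.range N, a n * g (x - lam n)) 2
        (volume : Measure ℝ)).toReal) atTop (nhds 0) := by
      have := (ENNReal.tendsto_toReal (by simp)).comp h0
      simpa [Function.comp_def] using this
    refine squeeze_zero (fun N => norm_nonneg _) (fun N => ?_) h0'
    rw [norm_sub_rev, key N]
    refine (aux_l2_int_bound (hf.sub (hS N)) hf).trans ?_
    calc (eLpNorm (fun x => f x - ∑ n ∈ Finset.range N, a n * g (x - lam n)) 2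
          volume).toReal * (eLpNorm f 2 volume).toReal
        ≤ (eLpNorm (fun x => f x - ∑ n ∈ Finset.range N, a n * g (x - lam n)) 2
          volume).toReal * 1 :=
          mul_le_mul_of_nonneg_left htoReal ENNReal.toReal_nonneg
    _ = _ := mul_one _
  set S : ℝ≥0∞ := ∑' n, ENNReal.ofReal (‖b n‖ ^ 2) with hSdef
  have h5 : ∀ N : ℕ, ENNReal.ofReal (‖∑ n ∈ Finset.range N, a n * conj (b n)‖ ^ 2)
      ≤ ENNReal.ofReal K * S := by
    intro N
    calc ENNReal.ofReal (‖∑ n ∈ Finset.range N, a n * conj (b n)‖ ^ 2)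
        ≤ ENNReal.ofReal (K * ∑ n ∈ Finset.range N, ‖b n‖ ^ 2) :=
          ENNReal.ofReal_le_ofReal (hCS N)
    _ = ENNReal.ofReal K * ENNReal.ofReal (∑ n ∈ Finset.range N, ‖b n‖ ^ 2) :=
          ENNReal.ofReal_mul hK.le
    _ ≤ ENNReal.ofReal K * S := by
          refine mul_le_mul_right ?_ _
          rw [ENNReal.ofReal_sum_of_nonneg (fun i _ => sq_nonneg _)]
          exact ENNReal.sum_le_tsum _
  have h6 : Tendsto (fun N => ENNReal.ofReal
      (‖∑ n ∈ Finset.range N, a n * conj (b n)‖ ^ 2)) atTop (nhds 1) := by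
    have t1 : Tendsto (fun N => ‖∑ n ∈ Finset.range N, a n * conj (b n)‖ ^ 2)
        atTop (nhds 1) := by
      have := ((continuous_norm.tendsto _).comp hlim).pow 2
      simpa using this
    have := (ENNReal.continuous_ofReal.tendsto _).comp t1
    simpa [Function.comp_def] using this
  have h7 : (1 : ℝ≥0∞) ≤ ENNReal.ofReal K * S :=
    le_of_tendsto h6 (Filter.Eventually.of_forall h5)
  calc ENNReal.ofReal K⁻¹ = ENNReal.ofReal K⁻¹ * 1 := (mul_one _).symm
  _ ≤ ENNReal.ofReal K⁻¹ * (ENNReal.ofReal K * S) := mul_le_mul_right h7 _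
  _ = ENNReal.ofReal (K⁻¹ * K) * S := by
        rw [← mul_assoc, ← ENNReal.ofReal_mul (inv_nonneg.2 hK.le)]
  _ = S := by rw [inv_mul_cancel₀ hK.ne', ENNReal.ofReal_one, one_mul]



noncomputable def Fcoef (g' : ℝ → ℂ) (ω : ℤ) (v : ℝ) : ℂ :=
  ∫ u, Set.indicator (Set.Ioc v (v+1)) (fun u => chr ω u * conj (g' u)) u

lemma testf_coeff {g g' : ℝ → ℂ} (hgg' : g =ᵐ[volume] g') (ω : ℤ) (s lamn : ℝ) :
    (∫ x, testf ω s x * conj (g (x - lamn))) = chr ω lamn * Fcoef g' ω (s - lamn) := by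
  have hq : Measure.QuasiMeasurePreserving (fun x : ℝ => x + (-lamn)) volume volume :=
    (MeasurePreserving.quasiMeasurePreserving
      ⟨measurable_add_const _, map_add_right_eq_self volume _⟩)
  have step1 : (∫ x, testf ω s x * conj (g (x - lamn)))
      = ∫ x, testf ω s x * conj (g' (x - lamn)) := by
    refine integral_congr_ae ?_
    have h := hq.ae_eq hgg'
    filter_upwards [h] with x hx
    simp only [Function.comp] at hx
    rw [show x - lamn = x + (-lamn) by ring, hx]
  rw [step1]
  have step2 : (∫ x, testf ω s x * conj (g' (x - lamn)))
      = ∫ u, testf ω s (u + lamn) * conj (g' u) := by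
    rw [← integral_add_right_eq_self (fun x => testf ω s x * conj (g' (x - lamn))) lamn]
    simp
  rw [step2]
  have step3 : (fun u => testf ω s (u + lamn) * conj (g' u))
      = fun u => chr ω lamn *
          Set.indicator (Set.Ioc (s - lamn) (s - lamn + 1))
            (fun u => chr ω u * conj (g' u)) u := by
    funext u
    by_cases hu : u ∈ Set.Ioc (s - lamn) (s - lamn + 1)
    · have hu' : u + lamn ∈ Set.Ioc s (s + 1) := by
        obtain ⟨h1, h2⟩ := hu; constructor <;> [linarith; linarith]
      rw [Set.indicator_of_mem hu, testf, Set.indicator_of_mem hu', chr_add]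
      ring
    · have hu' : u + lamn ∉ Set.Ioc s (s + 1) := by
        intro hc; exact hu ⟨by linarith [hc.1], by linarith [hc.2]⟩
      rw [Set.indicator_of_notMem hu, testf, Set.indicator_of_notMem hu']
      simp
  rw [step3, integral_const_mul]
  rfl

lemma Fcoef_stronglyMeasurable {g' : ℝ → ℂ} (hg' : StronglyMeasurable g') (ω : ℤ) :
    StronglyMeasurable (Fcoef g' ω) := by
  have hset : MeasurableSet {q : ℝ × ℝ | q.1 < q.2 ∧ q.2 ≤ q.1 + 1} :=
    (measurableSet_lt measurable_fst measurable_snd).inter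
      (measurableSet_le measurable_snd (measurable_fst.add_const 1))
  have h : StronglyMeasurable (fun p : ℝ × ℝ =>
      Set.indicator {q : ℝ × ℝ | q.1 < q.2 ∧ q.2 ≤ q.1 + 1}
        (fun q => chr ω q.2 * conj (g' q.2)) p) := by
    refine StronglyMeasurable.indicator ?_ hset
    exact (((chr_cont ω).stronglyMeasurable).comp_measurable measurable_snd).mul
      (continuous_star.comp_stronglyMeasurable (hg'.comp_measurable measurable_snd))
  have h2 := h.integral_prod_right'  (ν := volume)
  have heq : (Fcoef g' ω) = fun v => ∫ u, Set.indicator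
      {q : ℝ × ℝ | q.1 < q.2 ∧ q.2 ≤ q.1 + 1} (fun q => chr ω q.2 * conj (g' q.2)) (v, u) := by
    funext v
    unfold Fcoef
    congr 1
  rw [heq]
  exact h2

lemma count_sep {lam : ℕ → ℝ} {δ : ℝ} (hδ : 0 < δ)
    (hsep : ∀ m n : ℕ, m ≠ n → δ ≤ |lam m - lam n|) (u : ℝ) :
    (∑' n, Set.indicator (Set.Icc (0:ℝ) δ) (fun _ => (1:ℝ≥0∞)) (u + lam n)) ≤ 2 := by
  set A := {n : ℕ | u + lam n ∈ Set.Icc (0:ℝ) δ} with hA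
  have hpm : ∀ {i j : ℕ}, i ∈ A → j ∈ A → i ≠ j →
      lam i - lam j = δ ∨ lam i - lam j = -δ := by
    intro i j hi hj hij
    simp only [hA, Set.mem_setOf_eq, Set.mem_Icc] at hi hj
    have h1 : |lam i - lam j| ≤ δ := by
      rw [abs_le]; constructor <;> linarith [hi.1, hi.2, hj.1, hj.2]
    have : |lam i - lam j| = δ := le_antisymm h1 (hsep i j hij)
    exact (abs_eq hδ.le).1 this
  obtain ⟨m, k, hsub⟩ : ∃ m k : ℕ, A ⊆ {m, k} := by
    by_cases hAe : A = ∅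
    · exact ⟨0, 0, by simp [hAe]⟩
    · obtain ⟨m, hm⟩ := Set.nonempty_iff_ne_empty.2 hAe
      by_cases h1 : ∃ k ∈ A, k ≠ m
      · obtain ⟨k, hk, hkm⟩ := h1
        refine ⟨m, k, fun j hj => ?_⟩
        by_contra hcon
        simp only [Set.mem_insert_iff, Set.mem_singleton_iff, not_or] at hcon
        obtain ⟨hjm, hjk⟩ := hcon
        rcases hpm hj hm hjm with a | a <;> rcases hpm hj hk hjk with b | b <;>
          rcases hpm hk hm hkm with c | c <;> linarith
      · push_neg at h1
        exact ⟨m, m, fun j hj => by simp [h1 j hj]⟩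
  have heq : (∑' n, Set.indicator (Set.Icc (0:ℝ) δ) (fun _ => (1:ℝ≥0∞)) (u + lam n))
      = ∑ n ∈ ({m, k} : Finset ℕ), Set.indicator (Set.Icc (0:ℝ) δ)
          (fun _ => (1:ℝ≥0∞)) (u + lam n) := by
    refine tsum_eq_sum ?_
    intro n hn
    have hnA : n ∉ A := by
      intro h
      rcases hsub h with h' | h' <;> simp_all
    rw [Set.indicator_of_notMem (by simpa [hA, Set.mem_setOf_eq] using hnA)]
  rw [heq]
  calc ∑ n ∈ ({m, k} : Finset ℕ), Set.indicator (Set.Icc (0:ℝ) δ)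
        (fun _ => (1:ℝ≥0∞)) (u + lam n)
      ≤ ∑ _n ∈ ({m, k} : Finset ℕ), 1 := by
        refine Finset.sum_le_sum fun i _ => ?_
        by_cases h : u + lam i ∈ Set.Icc (0:ℝ) δ <;>
          simp [Set.indicator_of_mem, Set.indicator_of_notMem, h]
  _ = (({m, k} : Finset ℕ).card : ℝ≥0∞) := by simp
  _ ≤ 2 := by
      have := Finset.card_insert_le m ({k} : Finset ℕ)
      simp only [Finset.card_singleton] at this
      exact_mod_cast Nat.cast_le.2 this



lemma bessel_step {g' : ℝ → ℂ} (hg'sm : StronglyMeasurable g')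
    (hg' : MemLp g' 2 (volume : Measure ℝ)) (v : ℝ) :
    (∑' ω : ℤ, ENNReal.ofReal (‖Fcoef g' ω v‖ ^ 2))
      ≤ ∫⁻ u in Set.Ioc v (v+1), ENNReal.ofReal (‖g' u‖ ^ 2) := by
  haveI : Fact ((0:ℝ) < 1) := ⟨one_pos⟩
  set X : ℝ≥0∞ := ∫⁻ u in Set.Ioc v (v+1), ENNReal.ofReal (‖g' u‖ ^ 2) with hX
  set L : AddCircle (1:ℝ) → ℂ := AddCircle.liftIoc 1 v g' with hL
  have hLsm : StronglyMeasurable L := by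
    rw [hL]
    unfold AddCircle.liftIoc
    exact hg'sm.comp_measurable
      (measurable_subtype_coe.comp (AddCircle.measurableEquivIoc 1 v).measurable)
  have hvol : (volume : Measure (AddCircle (1:ℝ))) = haarAddCircle := by
    rw [AddCircle.volume_eq_smul_haarAddCircle]
    simp
  have hmp : MeasurePreserving ((↑) : ℝ → AddCircle (1:ℝ))
      (volume.restrict (Set.Ioc v (v+1))) haarAddCircle := by
    have := AddCircle.measurePreserving_mk 1 v
    rwa [hvol] at this
  have hae : (fun x : ℝ => L ((x : ℝ) : AddCircle (1:ℝ)))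
      =ᵐ[volume.restrict (Set.Ioc v (v+1))] g' := by
    filter_upwards [ae_restrict_mem measurableSet_Ioc] with x hx
    exact AddCircle.liftIoc_coe_apply hx
  have heLp : eLpNorm L 2 haarAddCircle
      = eLpNorm g' 2 (volume.restrict (Set.Ioc v (v+1))) := by
    rw [← eLpNorm_comp_measurePreserving hLsm.aestronglyMeasurable hmp]
    exact eLpNorm_congr_ae hae
  have hLmem : MemLp L 2 haarAddCircle :=
    ⟨hLsm.aestronglyMeasurable, by rw [heLp]; exact (hg'.restrict _).2⟩
  set Λ := hLmem.toLp L with hΛ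
  -- identify the coefficients
  have hcoef : ∀ ω : ℤ, ‖Fcoef g' ω v‖ = ‖(inner ℂ (fourierLp 2 ω) Λ : ℂ)‖ := by
    intro ω
    have e1 : (inner ℂ (fourierLp 2 ω) Λ : ℂ)
        = ∫ t : AddCircle (1:ℝ), conj (fourier ω t) * L t ∂haarAddCircle := by
      rw [MeasureTheory.L2.inner_def]
      refine integral_congr_ae ?_
      filter_upwards [coeFn_fourierLp 2 ω, hLmem.coeFn_toLp] with t h1 h2
      rw [RCLike.inner_apply, h1, h2, mul_comm]
    have hsm2 : AEStronglyMeasurable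
        (fun t : AddCircle (1:ℝ) => conj (fourier ω t) * L t) haarAddCircle :=
      (continuous_star.comp_aestronglyMeasurable
        ((map_continuous (fourier ω)).stronglyMeasurable.aestronglyMeasurable)).mul
        hLsm.aestronglyMeasurable
    have e2 : (∫ t : AddCircle (1:ℝ), conj (fourier ω t) * L t ∂haarAddCircle)
        = ∫ x in Set.Ioc v (v+1),
            conj (fourier ω (x : AddCircle (1:ℝ))) * L ((x:ℝ) : AddCircle (1:ℝ)) := by
      rw [← hmp.map_eq, integral_map hmp.measurable.aemeasurable]
      rw [hmp.map_eq]
      exact hsm2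
    have e3 : (∫ x in Set.Ioc v (v+1),
          conj (fourier ω (x : AddCircle (1:ℝ))) * L ((x:ℝ) : AddCircle (1:ℝ)))
        = ∫ x in Set.Ioc v (v+1), conj (chr ω x) * g' x := by
      refine integral_congr_ae ?_
      filter_upwards [ae_restrict_mem measurableSet_Ioc] with x hx
      rw [hL, AddCircle.liftIoc_coe_apply hx]
      congr 1
      rw [fourier_coe_apply]
      unfold chr
      norm_num
    have e4 : Fcoef g' ω v = conj (inner ℂ (fourierLp 2 ω) Λ : ℂ) := by
      have e4' : Fcoef g' ω v
          = ∫ x in Set.Ioc v (v+1), chr ω x * conj (g' x) := by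
        unfold Fcoef
        exact integral_indicator measurableSet_Ioc
      rw [e4', e1, e2, e3, ← integral_conj]
      refine setIntegral_congr_fun measurableSet_Ioc fun x _ => ?_
      simp [mul_comm]
    rw [e4, RCLike.norm_conj]
  -- the L² norm of Λ
  have hnorm : ENNReal.ofReal (‖Λ‖ ^ 2) = X := by
    have h2 : eLpNorm g' 2 (volume.restrict (Set.Ioc v (v+1))) = X ^ (1/2 : ℝ) := by
      rw [eLpNorm_eq_lintegral_rpow_enorm_toReal (by norm_num) (by norm_num)]
      simp only [ENNReal.toReal_ofNat]
      congr 1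
      rw [hX]
      refine lintegral_congr fun u => ?_
      rw [show ((2:ℝ)) = ((2:ℕ):ℝ) by norm_num, ENNReal.rpow_natCast,
        ← ofReal_norm, ENNReal.ofReal_pow (norm_nonneg _)]
    have hXeq : (X ^ (1/2 : ℝ)) ^ (2 : ℕ) = X := by
      rw [← ENNReal.rpow_natCast (X ^ (1/2:ℝ)) 2, ← ENNReal.rpow_mul]
      norm_num
    have hfin : eLpNorm g' 2 (volume.restrict (Set.Ioc v (v+1))) ≠ ∞ :=
      (hg'.restrict _).2.ne
    have hXfin : X ≠ ∞ := by
      rw [← hXeq, ← h2]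
      exact ENNReal.pow_ne_top hfin
    rw [Lp.norm_toLp, heLp, h2, ← ENNReal.toReal_pow,
      ENNReal.ofReal_toReal (by rw [hXeq]; exact hXfin), hXeq]
  -- Bessel
  rw [ENNReal.tsum_eq_iSup_sum]
  refine iSup_le fun Φ => ?_
  have hb := orthonormal_fourier.sum_inner_products_le (s := Φ) Λ
  calc (∑ ω ∈ Φ, ENNReal.ofReal (‖Fcoef g' ω v‖ ^ 2))
      = ENNReal.ofReal (∑ ω ∈ Φ, ‖Fcoef g' ω v‖ ^ 2) :=
        (ENNReal.ofReal_sum_of_nonneg fun i _ => sq_nonneg _).symm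
  _ ≤ ENNReal.ofReal (‖Λ‖ ^ 2) := by
      refine ENNReal.ofReal_le_ofReal ?_
      refine le_trans (le_of_eq ?_) hb
      exact Finset.sum_congr rfl fun ω _ => by rw [hcoef ω]
  _ = X := hnorm



lemma covering {lam : ℕ → ℝ} {δ : ℝ} (hδ : 0 < δ)
    (hsep : ∀ m n : ℕ, m ≠ n → δ ≤ |lam m - lam n|) {φ : ℝ → ℝ≥0∞} (hφ : Measurable φ)
    {c : ℝ≥0∞} (hlow : ∀ s : ℝ, c ≤ ∑' n, φ (s - lam n)) :
    c * ENNReal.ofReal δ ≤ 2 * ∫⁻ v, φ v := by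
  have step1 : c * ENNReal.ofReal δ = ∫⁻ _ in Set.Icc (0:ℝ) δ, c := by
    rw [setLIntegral_const, Real.volume_Icc, sub_zero]
  have step2 : (∫⁻ _ in Set.Icc (0:ℝ) δ, c)
      ≤ ∫⁻ s in Set.Icc (0:ℝ) δ, ∑' n, φ (s - lam n) :=
    lintegral_mono fun s => hlow s
  have hmn : ∀ n : ℕ, Measurable fun s : ℝ => φ (s - lam n) :=
    fun n => hφ.comp (measurable_id.sub_const (lam n))
  have step3 : (∫⁻ s in Set.Icc (0:ℝ) δ, ∑' n, φ (s - lam n))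
      = ∑' n, ∫⁻ s in Set.Icc (0:ℝ) δ, φ (s - lam n) :=
    lintegral_tsum fun n => (hmn n).aemeasurable
  have step4 : ∀ n : ℕ, (∫⁻ s in Set.Icc (0:ℝ) δ, φ (s - lam n))
      = ∫⁻ u, Set.indicator (Set.Icc (0:ℝ) δ) (fun _ => (1:ℝ≥0∞)) (u + lam n) * φ u := by
    intro n
    rw [← lintegral_indicator measurableSet_Icc]
    have e1 : (fun s => Set.indicator (Set.Icc (0:ℝ) δ) (fun s => φ (s - lam n)) s)
        = fun s => Set.indicator (Set.Icc (0:ℝ) δ) (fun _ => (1:ℝ≥0∞)) s * φ (s - lam n) := by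
      funext s
      by_cases hs : s ∈ Set.Icc (0:ℝ) δ <;>
        simp [Set.indicator_of_mem, Set.indicator_of_notMem, hs]
    rw [e1, ← lintegral_add_right_eq_self
      (fun s => Set.indicator (Set.Icc (0:ℝ) δ) (fun _ => (1:ℝ≥0∞)) s * φ (s - lam n)) (lam n)]
    simp
  have step5 : (∑' n, ∫⁻ u, Set.indicator (Set.Icc (0:ℝ) δ) (fun _ => (1:ℝ≥0∞)) (u + lam n) * φ u)
      = ∫⁻ u, (∑' n, Set.indicator (Set.Icc (0:ℝ) δ) (fun _ => (1:ℝ≥0∞)) (u + lam n)) * φ u := by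
    rw [← lintegral_tsum]
    · congr 1
      funext u
      exact ENNReal.tsum_mul_right
    · intro n
      refine Measurable.aemeasurable ?_
      exact ((measurable_one.indicator measurableSet_Icc).comp
        (measurable_id.add_const (lam n))).mul hφ
  calc c * ENNReal.ofReal δ = ∫⁻ _ in Set.Icc (0:ℝ) δ, c := step1
  _ ≤ ∫⁻ s in Set.Icc (0:ℝ) δ, ∑' n, φ (s - lam n) := step2
  _ = ∑' n, ∫⁻ s in Set.Icc (0:ℝ) δ, φ (s - lam n) := step3
  _ = ∫⁻ u, (∑' n, Set.indicator (Set.Icc (0:ℝ) δ) (fun _ => (1:ℝ≥0∞)) (u + lam n)) * φ u := by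
      rw [← step5]; exact tsum_congr step4
  _ ≤ ∫⁻ u, 2 * φ u := by
      refine lintegral_mono fun u => ?_
      exact mul_le_mul_left (count_sep hδ hsep u) _
  _ = 2 * ∫⁻ u, φ u := lintegral_const_mul 2 hφ

lemma lintegral_sq_ne_top {μ : Measure ℝ} {h : ℝ → ℂ} (hm : MemLp h 2 μ) :
    (∫⁻ u, ENNReal.ofReal (‖h u‖ ^ 2) ∂μ) ≠ ∞ := by
  set X := ∫⁻ u, ENNReal.ofReal (‖h u‖ ^ 2) ∂μ with hX
  have h2 : eLpNorm h 2 μ = X ^ (1/2 : ℝ) := by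
    rw [eLpNorm_eq_lintegral_rpow_enorm_toReal (by norm_num) (by norm_num)]
    simp only [ENNReal.toReal_ofNat]
    congr 1
    rw [hX]
    refine lintegral_congr fun u => ?_
    rw [show ((2:ℝ)) = ((2:ℕ):ℝ) by norm_num, ENNReal.rpow_natCast,
      ← ofReal_norm, ENNReal.ofReal_pow (norm_nonneg _)]
  have hXeq : (X ^ (1/2 : ℝ)) ^ (2 : ℕ) = X := by
    rw [← ENNReal.rpow_natCast (X ^ (1/2:ℝ)) 2, ← ENNReal.rpow_mul]
    norm_num
  rw [← hXeq, ← h2]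
  exact ENNReal.pow_ne_top hm.2.ne

lemma tonelli_step {G : ℝ → ℝ≥0∞} (hG : Measurable G) :
    (∫⁻ v, ∫⁻ u in Set.Ioc v (v+1), G u) = ∫⁻ u, G u := by
  have hS : MeasurableSet {q : ℝ × ℝ | q.1 < q.2 ∧ q.2 ≤ q.1 + 1} :=
    (measurableSet_lt measurable_fst measurable_snd).inter
      (measurableSet_le measurable_snd (measurable_fst.add_const 1))
  have hjoint : AEMeasurable (fun p : ℝ × ℝ =>
      Set.indicator {q : ℝ × ℝ | q.1 < q.2 ∧ q.2 ≤ q.1 + 1} (fun q => G q.2) p)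
      ((volume : Measure ℝ).prod (volume : Measure ℝ)) :=
    ((hG.comp measurable_snd).indicator hS).aemeasurable
  have e1 : (∫⁻ v, ∫⁻ u in Set.Ioc v (v+1), G u)
      = ∫⁻ v, ∫⁻ u, Set.indicator {q : ℝ × ℝ | q.1 < q.2 ∧ q.2 ≤ q.1 + 1}
          (fun q => G q.2) (v, u) := by
    refine lintegral_congr fun v => ?_
    rw [← lintegral_indicator measurableSet_Ioc]
    refine lintegral_congr fun u => ?_
    by_cases hu : u ∈ Set.Ioc v (v+1)
    · rw [Set.indicator_of_mem hu, Set.indicator_of_mem (by exact ⟨hu.1, hu.2⟩)]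
    · rw [Set.indicator_of_notMem hu,
        Set.indicator_of_notMem (by intro hc; exact hu ⟨hc.1, hc.2⟩)]
  rw [e1, lintegral_lintegral_swap hjoint]
  refine lintegral_congr fun u => ?_
  have e2 : (fun v => Set.indicator {q : ℝ × ℝ | q.1 < q.2 ∧ q.2 ≤ q.1 + 1}
      (fun q => G q.2) (v, u)) = fun v => Set.indicator (Set.Ico (u-1) u)
        (fun _ => G u) v := by
    funext v
    by_cases hv : v ∈ Set.Ico (u-1) u
    · rw [Set.indicator_of_mem hv,
        Set.indicator_of_mem (by exact ⟨hv.2, by linarith [hv.1]⟩)]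
    · rw [Set.indicator_of_notMem hv, Set.indicator_of_notMem ?_]
      intro hc
      exact hv ⟨by linarith [hc.2], hc.1⟩
  rw [e2, lintegral_indicator_const measurableSet_Ico, Real.volume_Ico]
  simp

end NoFrameAux

/-- There do not exist `g ∈ L²(ℝ)`, a uniformly discrete sequence `{λₙ} ⊂ ℝ`, functions
`{gₙ*} ⊂ L²(ℝ)` and a constant `K`, such that every `f ∈ L²(ℝ)` admits a series expansion
`f(x) = ∑ₙ ⟨f, gₙ*⟩ g(x − λₙ)` convergent in the `L²(ℝ)` norm, while also
`∑ₙ |⟨f, gₙ*⟩|² ≤ K ‖f‖²` for all `f ∈ L²(ℝ)`. -/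
theorem no_schauder_frame_of_discrete_translates_with_l2_coefficients :
    ¬ ∃ (g : ℝ → ℂ) (lam : ℕ → ℝ) (gs : ℕ → ℝ → ℂ) (K : ℝ),
      MemLp g 2 (volume : Measure ℝ) ∧
      (∃ δ : ℝ, 0 < δ ∧ ∀ m n : ℕ, m ≠ n → δ ≤ |lam m - lam n|) ∧
      (∀ n, MemLp (gs n) 2 (volume : Measure ℝ)) ∧
      (∀ f : ℝ → ℂ, MemLp f 2 (volume : Measure ℝ) →
        Tendsto
          (fun N : ℕ => eLpNorm
            (fun x : ℝ => f x - ∑ n ∈ Finset.range N,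
              (∫ t : ℝ, f t * conj (gs n t)) * g (x - lam n)) 2 (volume : Measure ℝ))
          atTop (nhds 0)) ∧
      (∀ f : ℝ → ℂ, MemLp f 2 (volume : Measure ℝ) →
        Summable (fun n : ℕ => ‖∫ t : ℝ, f t * conj (gs n t)‖ ^ 2) ∧
        (∑' n : ℕ, ‖∫ t : ℝ, f t * conj (gs n t)‖ ^ 2) ≤
          K * (eLpNorm f 2 (volume : Measure ℝ)).toReal ^ 2) := by
  rintro ⟨g, lam, gs, K, hg, ⟨δ, hδ, hsep⟩, hgs, hexp, hbes⟩
  by_cases hK : 0 < K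
  · -- main case
    -- strongly measurable representative of g
    set g' := hg.aestronglyMeasurable.mk g with hg'def
    have hg'sm : StronglyMeasurable g' := hg.aestronglyMeasurable.stronglyMeasurable_mk
    have hgg' : g =ᵐ[volume] g' := hg.aestronglyMeasurable.ae_eq_mk
    have hg' : MemLp g' 2 (volume : Measure ℝ) := hg.ae_eq hgg'
    -- the lower frame inequality for each test function
    have h2 : ∀ (ω : ℤ) (s : ℝ), ENNReal.ofReal K⁻¹
        ≤ ∑' n, ENNReal.ofReal (‖Fcoef g' ω (s - lam n)‖ ^ 2) := by
      intro ω s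
      have h := frame_lower_bound hg hexp hbes hK (testf_memℒp ω s)
        (testf_self_integral ω s) (testf_eLpNorm_le ω s)
      refine le_trans h (le_of_eq ?_)
      refine tsum_congr fun n => ?_
      rw [testf_coeff hgg' ω s (lam n), norm_mul, norm_chr, one_mul]
    -- measurability
    have hφm : ∀ ω : ℤ, Measurable fun v => ENNReal.ofReal (‖Fcoef g' ω v‖ ^ 2) := by
      intro ω
      exact (((Fcoef_stronglyMeasurable hg'sm ω).norm.measurable).pow_const 2).ennreal_ofReal
    -- covering bound
    have h4 : ∀ ω : ℤ, ENNReal.ofReal K⁻¹ * ENNReal.ofReal δ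
        ≤ 2 * ∫⁻ v, ENNReal.ofReal (‖Fcoef g' ω v‖ ^ 2) := by
      intro ω
      exact covering hδ hsep (hφm ω) (h2 ω)
    -- Bessel/Parseval bound
    have h5 : (∑' ω : ℤ, ∫⁻ v, ENNReal.ofReal (‖Fcoef g' ω v‖ ^ 2))
        ≤ ∫⁻ u, ENNReal.ofReal (‖g' u‖ ^ 2) := by
      have e1 : (∑' ω : ℤ, ∫⁻ v, ENNReal.ofReal (‖Fcoef g' ω v‖ ^ 2))
          = ∫⁻ v, ∑' ω : ℤ, ENNReal.ofReal (‖Fcoef g' ω v‖ ^ 2) :=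
        (lintegral_tsum fun ω => (hφm ω).aemeasurable).symm
      rw [e1]
      have e2 : (∫⁻ v, ∑' ω : ℤ, ENNReal.ofReal (‖Fcoef g' ω v‖ ^ 2))
          ≤ ∫⁻ v, ∫⁻ u in Set.Ioc v (v+1), ENNReal.ofReal (‖g' u‖ ^ 2) :=
        lintegral_mono fun v => bessel_step hg'sm hg' v
      refine e2.trans (le_of_eq ?_)
      exact tonelli_step ((hg'sm.norm.measurable.pow_const 2).ennreal_ofReal)
    have h6 : (∫⁻ u, ENNReal.ofReal (‖g' u‖ ^ 2)) ≠ ∞ := lintegral_sq_ne_top hg'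
    -- contradiction
    have hc0 : (ENNReal.ofReal K⁻¹ * ENNReal.ofReal δ) ≠ 0 := by
      refine mul_ne_zero ?_ ?_
      · exact (ENNReal.ofReal_pos.2 (inv_pos.2 hK)).ne'
      · exact (ENNReal.ofReal_pos.2 hδ).ne'
    have htop : (⊤ : ℝ≥0∞) ≤ 2 * ∫⁻ u, ENNReal.ofReal (‖g' u‖ ^ 2) := by
      calc (⊤ : ℝ≥0∞) = ∑' _ : ℤ, (ENNReal.ofReal K⁻¹ * ENNReal.ofReal δ) :=
            (ENNReal.tsum_const_eq_top_of_ne_zero hc0).symm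
      _ ≤ ∑' ω : ℤ, 2 * ∫⁻ v, ENNReal.ofReal (‖Fcoef g' ω v‖ ^ 2) :=
            ENNReal.tsum_le_tsum fun ω => h4 ω
      _ = 2 * ∑' ω : ℤ, ∫⁻ v, ENNReal.ofReal (‖Fcoef g' ω v‖ ^ 2) :=
            ENNReal.tsum_mul_left
      _ ≤ 2 * ∫⁻ u, ENNReal.ofReal (‖g' u‖ ^ 2) := mul_le_mul_right h5 _
    have : (2 : ℝ≥0∞) * ∫⁻ u, ENNReal.ofReal (‖g' u‖ ^ 2) ≠ ⊤ :=
      ENNReal.mul_ne_top (by norm_num) h6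
    exact this (top_le_iff.1 htop)
  · -- degenerate case K ≤ 0
    push_neg at hK
    set f : ℝ → ℂ := Set.indicator (Set.Ioc (0:ℝ) 1) (fun _ => (1:ℂ)) with hfdef
    have hf : MemLp f 2 (volume : Measure ℝ) :=
      memLp_indicator_const 2 measurableSet_Ioc (1:ℂ) (Or.inr (by simp))
    obtain ⟨hs, hle⟩ := hbes f hf
    have hz : ∀ n : ℕ, (∫ t, f t * conj (gs n t)) = 0 := by
      intro n
      have h0 : (∑' n : ℕ, ‖∫ t, f t * conj (gs n t)‖ ^ 2) ≤ 0 :=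
        hle.trans (mul_nonpos_iff.2 (Or.inr ⟨hK, sq_nonneg _⟩))
      have h1 : ‖∫ t, f t * conj (gs n t)‖ ^ 2 ≤ 0 :=
        le_trans (Summable.le_tsum hs n fun _ _ => sq_nonneg _) h0
      have h2 : ‖∫ t, f t * conj (gs n t)‖ = 0 := by
        nlinarith [norm_nonneg (∫ t, f t * conj (gs n t)), sq_nonneg ‖∫ t, f t * conj (gs n t)‖]
      exact norm_eq_zero.1 h2
    have h3 := hexp f hf
    simp only [hz, zero_mul, Finset.sum_const_zero, sub_zero] at h3
    have h4 : eLpNorm f 2 volume = 0 := tendsto_nhds_unique tendsto_const_nhds h3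
    rw [hfdef, eLpNorm_indicator_const measurableSet_Ioc (by norm_num) (by norm_num)] at h4
    simp [Real.volume_Ioc] at h4
end
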